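/- arXiv:1609.01642 — 2 statements merged into one kernel-verified Lean document; each statement's English description precedes it below -/
import Mathlib

section
/- The two-dimensional Marcinkiewicz kernel satisfies the identity M_A K_{M_A}(x,y) = (∑_{r=0}^{m_{A-1}-1} ψ_{M_{A-1}}(x+y)^r) · M_{A-1} K_{M_{A-1}}(x,y) + M_{A-1} ∑_{r=1}^{m_{A-1}-1} (∑_{q=0}^{r-1} ψ_{M_{A-1}}(x)^q)(∑_{s=0}^{r-1} ψ_{M_{A-1}}(y)^s) D_{M_{A-1}}(x) D_{M_{A-1}}(y) + ∑_{r=1}^{m_{A-1}-1} (∑_{q=0}^{r-1} ψ_{M_{A-1}}(x)^q) ψ_{M_{A-1}}(y)^r D_{M_{A-1}}(x) · M_{A-1} K_{M_{A-1}}(y) + ∑_{r=1}^{m_{A-1}-1} (∑_{s=0}^{r-1} ψ_{M_{A-1}}(y)^s) ψ_{M_{A-1}}(x)^r D_{M_{A-1}}(y) · M_{A-1} K_{M_{A-1}}(x), where K_n(x,y) := (1/n) ∑_{k=0}^{n-1} D_k(x) D_k(y) and K_n(x) := (1/n) ∑_{k=0}^{n-1} D_k(x). -/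
open Complex Finset

noncomputable section

/-- The generalized number system: `M 0 = 1`, `M (k+1) = m k * M k`. -/
def Mf (m : ℕ → ℕ) : ℕ → ℕ
  | 0 => 1
  | k + 1 => m k * Mf m k

/-- The generalized Rademacher function `r_k(x) = exp(2πi x_k / m_k)`. -/
def rad (m : ℕ → ℕ) (k : ℕ) (x : ∀ j, ZMod (m j)) : ℂ :=
  Complex.exp (2 * Real.pi * Complex.I * (x k).val / (m k))

/-- The Vilenkin function `ψ_n(x) = ∏ k, r_k(x)^{n_k}` where `n_k = (n / M_k) % m_k`
is the k-th digit of `n` in the generalized number system. -/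
def psi (m : ℕ → ℕ) (n : ℕ) (x : ∀ j, ZMod (m j)) : ℂ :=
  ∏ k ∈ Finset.range (n + 1), rad m k x ^ ((n / Mf m k) % m k)

/-- Vilenkin Dirichlet kernel. -/
def Dker (m : ℕ → ℕ) (n : ℕ) (x : ∀ j, ZMod (m j)) : ℂ :=
  ∑ j ∈ Finset.range n, psi m j x

/-- One-dimensional Vilenkin Fejér kernel. -/
def Fejer (m : ℕ → ℕ) (n : ℕ) (x : ∀ j, ZMod (m j)) : ℂ :=
  (n : ℂ)⁻¹ * ∑ k ∈ Finset.range n, Dker m k x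

/-- Two-dimensional Marcinkiewicz–Fejér kernel. -/
def MKer (m : ℕ → ℕ) (n : ℕ) (x y : ∀ j, ZMod (m j)) : ℂ :=
  (n : ℂ)⁻¹ * ∑ k ∈ Finset.range n, Dker m k x * Dker m k y

/-- `e_s ∈ G_m`: the element whose s-th coordinate is 1 and all others are 0. -/
def evec (m : ℕ → ℕ) (s : ℕ) : ∀ j, ZMod (m j) :=
  fun j => if j = s then 1 else 0

/-- `r_{i,n}(x,y) = ∏_{l=i}^{n} ∑_{s=0}^{m_l-1} ψ_{M_l}(x+y)^s`. -/
def rr (m : ℕ → ℕ) (i n : ℕ) (x y : ∀ j, ZMod (m j)) : ℂ :=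
  ∏ l ∈ Finset.Icc i n, ∑ s ∈ Finset.range (m l), psi m (Mf m l) (x + y) ^ s


namespace Stmt4Aux

variable {m : ℕ → ℕ}

lemma Mf_pos (hm : ∀ k, 2 ≤ m k) (k : ℕ) : 0 < Mf m k := by
  induction k with
  | zero => exact Nat.one_pos
  | succ k ih => exact Nat.mul_pos (by have := hm k; omega) ih

lemma two_pow_le_Mf (hm : ∀ k, 2 ≤ m k) (k : ℕ) : 2 ^ k ≤ Mf m k := by
  induction k with
  | zero => simp [Mf]
  | succ k ih =>
    calc 2 ^ (k+1) = 2 * 2 ^ k := by ring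
    _ ≤ m k * Mf m k := Nat.mul_le_mul (hm k) ih
    _ = Mf m (k+1) := rfl

lemma Mf_dvd {a b : ℕ} (h : a ≤ b) : Mf m a ∣ Mf m b := by
  induction b, h using Nat.le_induction with
  | base => exact dvd_rfl
  | succ b hb ih => exact ih.mul_left (m b)

lemma psi_eq (hm : ∀ k, 2 ≤ m k) (n : ℕ) {N : ℕ} (hN : n < N) (x : ∀ j, ZMod (m j)) :
    psi m n x = ∏ k ∈ range N, rad m k x ^ ((n / Mf m k) % m k) := by
  rw [psi]
  refine Finset.prod_subset (Finset.range_subset_range.mpr hN) ?_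
  intro k hk hk'
  simp only [Finset.mem_range, not_lt] at hk'
  have h1 : n < Mf m k :=
    lt_of_lt_of_le (lt_of_lt_of_le (Nat.lt_two_pow_self (n := n))
      (Nat.pow_le_pow_right (by norm_num) (by omega))) (two_pow_le_Mf hm k)
  rw [Nat.div_eq_of_lt h1]
  simp

lemma digit_add (hm : ∀ k, 2 ≤ m k) {B r j : ℕ} (hr : r < m B) (hj : j < Mf m B) (k : ℕ) :
    ((j + Mf m B * r) / Mf m k) % m k
      = ((j / Mf m k) % m k) + (if k = B then r else 0) := by
  rcases lt_trichotomy k B with h | rfl | h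
  · have hMk : 0 < Mf m k := Mf_pos hm k
    obtain ⟨u, hu⟩ : m k ∣ Mf m B / Mf m k := by
      obtain ⟨t, ht⟩ := Mf_dvd (m := m) (show k + 1 ≤ B from h)
      have h2 : Mf m B = Mf m k * (m k * t) := by
        rw [ht]; show m k * Mf m k * t = _; ring
      exact ⟨t, by rw [h2, Nat.mul_div_cancel_left _ hMk]⟩
    have h3 : Mf m B * r = Mf m k * (Mf m B / Mf m k * r) := by
      rw [← mul_assoc, Nat.mul_div_cancel' (Mf_dvd h.le)]
    rw [h3, Nat.add_mul_div_left _ _ hMk, hu, if_neg h.ne, add_zero, mul_assoc,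
      Nat.add_mul_mod_self_left]
  · rw [Nat.add_mul_div_left _ _ (Mf_pos hm _), Nat.div_eq_of_lt hj]
    simp [Nat.mod_eq_of_lt hr]
  · have hle : Mf m (B+1) ≤ Mf m k :=
      Nat.le_of_dvd (Mf_pos hm k) (Mf_dvd h)
    have h1 : j + Mf m B * r < Mf m k := by
      calc j + Mf m B * r < Mf m B + Mf m B * r := by omega
      _ = Mf m B * (r + 1) := by ring
      _ ≤ Mf m B * m B := Nat.mul_le_mul_left _ hr
      _ = Mf m (B+1) := by show _ = m B * Mf m B; ring
      _ ≤ Mf m k := hle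
    have h2 : j < Mf m k := by omega
    rw [Nat.div_eq_of_lt h1, Nat.div_eq_of_lt h2, if_neg h.ne', add_zero]

lemma psi_split (hm : ∀ k, 2 ≤ m k) {B r j : ℕ} (hr : r < m B) (hj : j < Mf m B)
    (x : ∀ j, ZMod (m j)) :
    psi m (j + Mf m B * r) x = psi m j x * rad m B x ^ r := by
  set N := B + (j + Mf m B * r) + 1 with hN
  rw [psi_eq hm _ (show j + Mf m B * r < N by omega) x,
      psi_eq hm j (show j < N by omega) x]
  have hBN : B ∈ range N := by simp [hN]
  calc ∏ k ∈ range N, rad m k x ^ ((j + Mf m B * r) / Mf m k % m k)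
      = ∏ k ∈ range N, (rad m k x ^ ((j / Mf m k) % m k) *
          if k = B then rad m B x ^ r else 1) := by
        refine Finset.prod_congr rfl fun k _ => ?_
        rw [digit_add hm hr hj k, pow_add]
        split_ifs with h
        · subst h; rfl
        · simp
    _ = (∏ k ∈ range N, rad m k x ^ ((j / Mf m k) % m k)) *
          ∏ k ∈ range N, (if k = B then rad m B x ^ r else 1) := by
        rw [Finset.prod_mul_distrib]
    _ = _ := by rw [Finset.prod_ite_eq' (range N) B, if_pos hBN]

lemma psi_zero (x : ∀ j, ZMod (m j)) : psi m 0 x = 1 := by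
  simp [psi]

lemma psi_Mf (hm : ∀ k, 2 ≤ m k) (B : ℕ) (x : ∀ j, ZMod (m j)) :
    psi m (Mf m B) x = rad m B x := by
  have h := psi_split hm (B := B) (r := 1) (j := 0) (by have := hm B; omega)
    (Mf_pos hm B) x
  simpa [psi_zero] using h

lemma rad_add (hm : ∀ k, 2 ≤ m k) (k : ℕ) (x y : ∀ j, ZMod (m j)) :
    rad m k (x + y) = rad m k x * rad m k y := by
  have hk : m k ≠ 0 := by have := hm k; omega
  haveI : NeZero (m k) := ⟨hk⟩
  have hkc : (m k : ℂ) ≠ 0 := Nat.cast_ne_zero.mpr hk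
  set a := (x k).val with ha
  set b := (y k).val with hb
  have hv : ((x + y) k).val = (a + b) % m k := by
    show ((x k) + (y k)).val = _
    rw [ZMod.val_add]
  have h1 : ((((a + b) % m k) + m k * ((a + b) / m k) : ℕ) : ℂ) = ((a + b : ℕ) : ℂ) := by
    rw [Nat.mod_add_div]
  rw [Nat.cast_add, Nat.cast_mul, Nat.cast_add] at h1
  have hmod : (((a + b) % m k : ℕ) : ℂ)
      = (a : ℂ) + (b : ℂ) - (m k : ℂ) * (((a + b) / m k : ℕ) : ℂ) := by
    linear_combination h1
  have harg : 2 * (Real.pi : ℂ) * Complex.I * (((a + b) % m k : ℕ) : ℂ) / (m k : ℂ)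
      = 2 * (Real.pi : ℂ) * Complex.I * (a : ℂ) / (m k : ℂ)
        + 2 * (Real.pi : ℂ) * Complex.I * (b : ℂ) / (m k : ℂ)
        + ((-(((a + b) / m k : ℕ) : ℤ) : ℤ) : ℂ) * (2 * (Real.pi : ℂ) * Complex.I) := by
    rw [hmod, Int.cast_neg, Int.cast_natCast]
    field_simp
    ring
  rw [rad, rad, rad, hv, harg, Complex.exp_add, Complex.exp_add,
    Complex.exp_int_mul_two_pi_mul_I, mul_one]

lemma sum_range_mul {β : Type*} [AddCommMonoid β] (f : ℕ → β) (a b : ℕ) :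
    ∑ k ∈ range (b * a), f k = ∑ q ∈ range a, ∑ i ∈ range b, f (i + b * q) := by
  induction a with
  | zero => simp
  | succ a ih =>
    rw [Nat.mul_succ, Finset.sum_range_add, ih, Finset.sum_range_succ]
    congr 1
    exact Finset.sum_congr rfl fun i _ => by rw [Nat.add_comm (b * a) i]

lemma Dker_split (hm : ∀ k, 2 ≤ m k) {B r j : ℕ} (hr : r < m B) (hj : j ≤ Mf m B)
    (x : ∀ j, ZMod (m j)) :
    Dker m (j + Mf m B * r) x =
      (∑ q ∈ range r, psi m (Mf m B) x ^ q) * Dker m (Mf m B) x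
        + psi m (Mf m B) x ^ r * Dker m j x := by
  rw [Dker, Nat.add_comm j (Mf m B * r), Finset.sum_range_add, sum_range_mul]
  congr 1
  · rw [Finset.sum_mul]
    refine Finset.sum_congr rfl fun q hq => ?_
    rw [Dker, Finset.mul_sum]
    refine Finset.sum_congr rfl fun i hi => ?_
    simp only [Finset.mem_range] at hq hi
    rw [psi_split hm (by omega) hi, psi_Mf hm, mul_comm]
  · rw [Dker, Finset.mul_sum]
    refine Finset.sum_congr rfl fun i hi => ?_
    simp only [Finset.mem_range] at hi
    rw [Nat.add_comm (Mf m B * r) i, psi_split hm hr (by omega), psi_Mf hm, mul_comm]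

end Stmt4Aux

open Stmt4Aux in
theorem stmt4 (m : ℕ → ℕ) (hm : ∀ k, 2 ≤ m k) (A : ℕ) (hA : 1 ≤ A)
    (x y : ∀ j, ZMod (m j)) :
    (Mf m A : ℂ) * MKer m (Mf m A) x y =
      (∑ r ∈ Finset.range (m (A - 1)), psi m (Mf m (A - 1)) (x + y) ^ r) *
          ((Mf m (A - 1) : ℂ) * MKer m (Mf m (A - 1)) x y) +
        (Mf m (A - 1) : ℂ) * ∑ r ∈ Finset.Icc 1 (m (A - 1) - 1),
          (∑ q ∈ Finset.range r, psi m (Mf m (A - 1)) x ^ q) *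
            (∑ s ∈ Finset.range r, psi m (Mf m (A - 1)) y ^ s) *
            Dker m (Mf m (A - 1)) x * Dker m (Mf m (A - 1)) y +
        (∑ r ∈ Finset.Icc 1 (m (A - 1) - 1),
          (∑ q ∈ Finset.range r, psi m (Mf m (A - 1)) x ^ q) * psi m (Mf m (A - 1)) y ^ r *
            Dker m (Mf m (A - 1)) x * ((Mf m (A - 1) : ℂ) * Fejer m (Mf m (A - 1)) y)) +
        ∑ r ∈ Finset.Icc 1 (m (A - 1) - 1),
          (∑ s ∈ Finset.range r, psi m (Mf m (A - 1)) y ^ s) * psi m (Mf m (A - 1)) x ^ r *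
            Dker m (Mf m (A - 1)) y * ((Mf m (A - 1) : ℂ) * Fejer m (Mf m (A - 1)) x) := by
  obtain ⟨B, rfl⟩ : ∃ B, A = B + 1 := ⟨A - 1, (Nat.succ_pred_eq_of_pos hA).symm⟩
  simp only [Nat.add_sub_cancel]
  have hmm : 2 ≤ m B := hm B
  have hMpos : 0 < Mf m B := Mf_pos hm B
  have hMne : (Mf m B : ℂ) ≠ 0 := Nat.cast_ne_zero.mpr hMpos.ne'
  have hMAne : (Mf m (B+1) : ℂ) ≠ 0 := Nat.cast_ne_zero.mpr (Mf_pos hm (B+1)).ne'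
  simp only [MKer, Fejer, mul_inv_cancel_left₀ hMne, mul_inv_cancel_left₀ hMAne]
  set M := Mf m B with hMdef
  set wx := psi m M x with hwx
  set wy := psi m M y with hwy
  set DX := Dker m M x with hDX
  set DY := Dker m M y with hDY
  set SX := ∑ k ∈ range M, Dker m k x with hSX
  set SY := ∑ k ∈ range M, Dker m k y with hSY
  set SXY := ∑ k ∈ range M, Dker m k x * Dker m k y with hSXY
  have hwxy : psi m M (x + y) = wx * wy := by
    rw [hwx, hwy, psi_Mf hm, psi_Mf hm, psi_Mf hm, rad_add hm]
  have hMA : Mf m (B+1) = m B * M := rfl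
  -- LHS transformation
  have hL : ∑ k ∈ range (Mf m (B+1)), Dker m k x * Dker m k y
      = ∑ r ∈ range (m B), ((M : ℂ) *
          ((∑ q ∈ range r, wx ^ q) * (∑ s ∈ range r, wy ^ s) * DX * DY)
        + (∑ q ∈ range r, wx ^ q) * wy ^ r * DX * SY
        + (∑ s ∈ range r, wy ^ s) * wx ^ r * DY * SX
        + wx ^ r * wy ^ r * SXY) := by
    rw [hMA, mul_comm (m B) M, sum_range_mul]
    refine Finset.sum_congr rfl fun r hr => ?_
    simp only [Finset.mem_range] at hr
    have hsplit : ∀ j ∈ range M,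
        Dker m (j + M * r) x * Dker m (j + M * r) y
          = ((∑ q ∈ range r, wx ^ q) * DX) * ((∑ s ∈ range r, wy ^ s) * DY)
            + ((∑ q ∈ range r, wx ^ q) * DX) * (wy ^ r) * Dker m j y
            + ((∑ s ∈ range r, wy ^ s) * DY) * (wx ^ r) * Dker m j x
            + (wx ^ r * wy ^ r) * (Dker m j x * Dker m j y) := by
      intro j hj
      simp only [Finset.mem_range] at hj
      rw [Dker_split hm hr hj.le x, Dker_split hm hr hj.le y]
      ring
    rw [Finset.sum_congr rfl hsplit]
    simp only [Finset.sum_add_distrib, ← Finset.mul_sum, Finset.sum_const,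
      Finset.card_range, nsmul_eq_mul]
    ring
  rw [hL]
  -- RHS transformation: Icc sums → range sums
  have hIcc : ∀ g : ℕ → ℂ, g 0 = 0 →
      ∑ r ∈ Finset.Icc 1 (m B - 1), g r = ∑ r ∈ range (m B), g r := by
    intro g hg
    have hset : range (m B) = insert 0 (Finset.Icc 1 (m B - 1)) := by
      ext k
      simp only [Finset.mem_range, Finset.mem_insert, Finset.mem_Icc]
      omega
    rw [hset, Finset.sum_insert (by simp), hg, zero_add]
  rw [hIcc _ (by simp), hIcc _ (by simp), hIcc _ (by simp)]
  simp only [hwxy, Finset.sum_mul, Finset.mul_sum, ← Finset.sum_add_distrib]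
  refine Finset.sum_congr rfl fun r _ => ?_
  simp only [Finset.sum_add_distrib, mul_pow]
  ring
end
end

section
/- There exists a constant c > 0 (depending only on the bounded Vilenkin sequence m) such that for all A ∈ ℕ and all x ∈ G_m, |K_{M_A}(x)| ≤ c ∑_{s=0}^{A} (M_s/M_A) ∑_{x_s=1}^{m_s-1} D_{M_A}(x − x_s e_s), where e_s is the element of G_m whose s-th coordinate is 1 and all other coordinates are 0. -/
open Complex Finset

noncomputable section

section Aux

variable {m : ℕ → ℕ}

/-- digit of n at position k -/
def digit (m : ℕ → ℕ) (n k : ℕ) : ℕ := (n / Mf m k) % m k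

/-- E_j(x) = sum of powers of rad -/
def Ek (m : ℕ → ℕ) (j : ℕ) (x : ∀ i, ZMod (m i)) : ℂ :=
  ∑ k ∈ Finset.range (m j), rad m j x ^ k

def Tk (m : ℕ → ℕ) (j : ℕ) (x : ∀ i, ZMod (m i)) : ℂ :=
  ∑ k ∈ Finset.range (m j), ∑ l ∈ Finset.range k, rad m j x ^ l

lemma Mf_pos (hm : ∀ k, 2 ≤ m k) (k : ℕ) : 0 < Mf m k := by
  induction k with
  | zero => simp [Mf]
  | succ k ih => have := hm k; simp only [Mf]; positivity

lemma lt_Mf (hm : ∀ k, 2 ≤ m k) (k : ℕ) : k < Mf m k := by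
  induction k with
  | zero => simp [Mf]
  | succ k ih =>
    have h2 := hm k
    have := Mf_pos hm k
    calc k + 1 < Mf m k + Mf m k := by omega
      _ ≤ m k * Mf m k := by nlinarith
      _ = Mf m (k+1) := rfl

lemma Mf_prod_Ico {a b : ℕ} (h : a ≤ b) :
    Mf m b = (∏ l ∈ Finset.Ico a b, m l) * Mf m a := by
  induction b, h using Nat.le_induction with
  | base => simp
  | succ b hb ih =>
    rw [Finset.prod_Ico_succ_top hb]
    show m b * Mf m b = _
    rw [ih]; ring

lemma Mf_dvd {a b : ℕ} (h : a ≤ b) : Mf m a ∣ Mf m b := ⟨_, by rw [Mf_prod_Ico h]; ring⟩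

lemma Mf_mono (hm : ∀ k, 2 ≤ m k) {a b : ℕ} (h : a ≤ b) : Mf m a ≤ Mf m b :=
  Nat.le_of_dvd (Mf_pos hm b) (Mf_dvd h)

lemma Mf_prod (A : ℕ) : Mf m A = ∏ j ∈ Finset.range A, m j := by
  rw [Finset.range_eq_Ico]
  simpa [Mf] using (Mf_prod_Ico (Nat.zero_le A) : Mf m A = _)

lemma psi_eq_prod (hm : ∀ k, 2 ≤ m k) {n N : ℕ} (hN : n < N) (x : ∀ j, ZMod (m j)) :
    psi m n x = ∏ k ∈ Finset.range N, rad m k x ^ digit m n k := by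
  rw [psi]
  simp only [digit]
  rw [← Finset.prod_range_mul_prod_Ico (fun k => rad m k x ^ (n / Mf m k % m k)) hN]
  have : ∏ k ∈ Finset.Ico (n+1) N, rad m k x ^ (n / Mf m k % m k) = 1 := by
    apply Finset.prod_eq_one
    intro k hk
    simp only [Finset.mem_Ico] at hk
    have : n < Mf m k := lt_of_le_of_lt (by omega) (lt_Mf hm k)
    rw [Nat.div_eq_of_lt this]
    simp
  rw [this, mul_one]

lemma digit_split (hm : ∀ k, 2 ≤ m k) {j k q : ℕ} (hq : q < Mf m j) (hk : k < m j) (i : ℕ) :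
    digit m (k * Mf m j + q) i = digit m q i + (if i = j then k else 0) := by
  rcases lt_trichotomy i j with h | h | h
  · simp only [if_neg h.ne, add_zero, digit]
    obtain ⟨c, hc⟩ := Mf_dvd (show i + 1 ≤ j by omega)
    have hMi : 0 < Mf m i := Mf_pos hm i
    have : k * Mf m j = (k * c * m i) * Mf m i := by
      rw [hc]; show _ = k * c * m i * Mf m i; simp only [Mf]; ring
    rw [this, Nat.add_comm, Nat.add_mul_div_right _ _ hMi, Nat.add_mul_mod_self_right]
  · subst h
    simp only [if_pos rfl, digit]
    rw [Nat.add_comm, Nat.add_mul_div_right _ _ (Mf_pos hm i), Nat.div_eq_of_lt hq]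
    simp [Nat.mod_eq_of_lt hk, Nat.div_eq_of_lt hq]
  · have h1 : k * Mf m j + q < Mf m (j+1) := by
      have : (k+1) * Mf m j ≤ m j * Mf m j := Nat.mul_le_mul_right _ (by omega)
      calc k * Mf m j + q < (k+1) * Mf m j := by rw [Nat.succ_mul]; omega
        _ ≤ Mf m (j+1) := this
    have h2 : k * Mf m j + q < Mf m i := lt_of_lt_of_le h1 (Mf_mono hm (by omega))
    have h3 : q < Mf m i := lt_of_le_of_lt (by omega) h2
    simp [digit, Nat.div_eq_of_lt h2, Nat.div_eq_of_lt h3, h.ne']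

lemma psi_split (hm : ∀ k, 2 ≤ m k) {j k q : ℕ} (hq : q < Mf m j) (hk : k < m j)
    (x : ∀ i, ZMod (m i)) :
    psi m (k * Mf m j + q) x = rad m j x ^ k * psi m q x := by
  set N := k * Mf m j + q + j + 1 with hN
  rw [psi_eq_prod hm (show k * Mf m j + q < N by omega) x,
    psi_eq_prod hm (show q < N by have := Mf_pos hm j; nlinarith) x]
  have hjN : j ∈ Finset.range N := by simp only [hN, Finset.mem_range]; omega
  calc ∏ i ∈ Finset.range N, rad m i x ^ digit m (k * Mf m j + q) i
      = ∏ i ∈ Finset.range N, (rad m i x ^ digit m q i * if i = j then rad m i x ^ k else 1) := by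
        apply Finset.prod_congr rfl
        intro i _
        rw [digit_split hm hq hk i, pow_add]
        congr 1
        split <;> simp
    _ = (∏ i ∈ Finset.range N, rad m i x ^ digit m q i) *
          ∏ i ∈ Finset.range N, (if i = j then rad m i x ^ k else 1) := by
        rw [Finset.prod_mul_distrib]
    _ = rad m j x ^ k * ∏ i ∈ Finset.range N, rad m i x ^ digit m q i := by
        rw [Finset.prod_ite_eq' (Finset.range N) j (fun i => rad m i x ^ k), if_pos hjN]
        ring

lemma sum_range_mul_split {α : Type*} [AddCommMonoid α] (f : ℕ → α) (a b : ℕ) :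
    ∑ n ∈ Finset.range (a * b), f n = ∑ k ∈ Finset.range a, ∑ q ∈ Finset.range b, f (k * b + q) := by
  induction a with
  | zero => simp
  | succ a ih =>
    rw [Finset.sum_range_succ, ← ih, Nat.succ_mul, Finset.sum_range_add]

end Aux
section Aux2
variable {m : ℕ → ℕ}

lemma psi_zero (x : ∀ i, ZMod (m i)) : psi m 0 x = 1 := by simp [psi]

lemma Dker_mul (hm : ∀ k, 2 ≤ m k) {j k : ℕ} (hk : k ≤ m j) (x : ∀ i, ZMod (m i)) :
    Dker m (k * Mf m j) x = Dker m (Mf m j) x * ∑ l ∈ Finset.range k, rad m j x ^ l := by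
  rw [Dker, sum_range_mul_split, Finset.mul_sum]
  apply Finset.sum_congr rfl
  intro l hl
  simp only [Finset.mem_range] at hl
  calc ∑ q ∈ Finset.range (Mf m j), psi m (l * Mf m j + q) x
      = ∑ q ∈ Finset.range (Mf m j), rad m j x ^ l * psi m q x :=
        Finset.sum_congr rfl (fun q hq => psi_split hm (Finset.mem_range.1 hq) (by omega) x)
    _ = _ := by rw [← Finset.mul_sum, Dker]; ring

lemma Dker_add (hm : ∀ k, 2 ≤ m k) {j k q : ℕ} (hk : k < m j) (hq : q ≤ Mf m j)
    (x : ∀ i, ZMod (m i)) :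
    Dker m (k * Mf m j + q) x = Dker m (k * Mf m j) x + rad m j x ^ k * Dker m q x := by
  rw [Dker, Finset.sum_range_add, Dker, Dker, Finset.mul_sum]
  congr 1
  apply Finset.sum_congr rfl
  intro r hr
  simp only [Finset.mem_range] at hr
  rw [psi_split hm (by omega) hk x]

lemma Dker_Mf_succ (hm : ∀ k, 2 ≤ m k) (j : ℕ) (x : ∀ i, ZMod (m i)) :
    Dker m (Mf m (j+1)) x = Ek m j x * Dker m (Mf m j) x := by
  show Dker m (m j * Mf m j) x = _
  rw [Dker_mul hm (le_refl (m j)) x, Ek]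
  ring

lemma Dker_Mf_prod (hm : ∀ k, 2 ≤ m k) (A : ℕ) (x : ∀ i, ZMod (m i)) :
    Dker m (Mf m A) x = ∏ j ∈ Finset.range A, Ek m j x := by
  induction A with
  | zero =>
    show Dker m 1 x = 1
    rw [Dker, Finset.sum_range_one, psi_zero]
  | succ A ih =>
    rw [Dker_Mf_succ hm A x, ih, Finset.prod_range_succ]
    ring

lemma norm_rad (x : ∀ i, ZMod (m i)) (k : ℕ) : ‖rad m k x‖ = 1 := by
  rw [rad]
  have : 2 * Real.pi * Complex.I * ((x k).val : ℂ) / (m k : ℂ) =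
      ((2 * Real.pi * (x k).val / (m k) : ℝ) : ℂ) * Complex.I := by
    push_cast
    ring
  rw [this, Complex.norm_exp_ofReal_mul_I]

lemma rad_pow_m (x : ∀ i, ZMod (m i)) (k : ℕ) (hmk : m k ≠ 0) : rad m k x ^ (m k) = 1 := by
  rw [rad, ← Complex.exp_nat_mul]
  have : (m k : ℂ) * (2 * Real.pi * Complex.I * ((x k).val : ℂ) / (m k : ℂ)) =
      ((x k).val : ℂ) * (2 * Real.pi * Complex.I) := by
    have hc : (m k : ℂ) ≠ 0 := Nat.cast_ne_zero.2 hmk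
    field_simp
  rw [this, Complex.exp_nat_mul_two_pi_mul_I]

lemma rad_eq_one {x : ∀ i, ZMod (m i)} {k : ℕ} (h : x k = 0) : rad m k x = 1 := by
  rw [rad, h]
  simp

lemma rad_ne_one (hm : ∀ k, 2 ≤ m k) {x : ∀ i, ZMod (m i)} {k : ℕ} (h : x k ≠ 0) :
    rad m k x ≠ 1 := by
  have hmk : (1 : ℕ) < m k := lt_of_lt_of_le one_lt_two (hm k)
  have : NeZero (m k) := ⟨by omega⟩
  have hval : 0 < (x k).val :=
    Nat.pos_of_ne_zero (fun h' => h (by rwa [← ZMod.val_eq_zero]))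
  have hvlt : (x k).val < m k := ZMod.val_lt (x k)
  intro heq
  rw [rad, Complex.exp_eq_one_iff] at heq
  obtain ⟨n, hn⟩ := heq
  have hmne : (m k : ℂ) ≠ 0 := Nat.cast_ne_zero.2 (by omega)
  have hI : (2 * Real.pi * Complex.I) ≠ 0 := by
    simp [Real.pi_ne_zero, Complex.I_ne_zero]
  have h0 : (2 * Real.pi * Complex.I) * (((x k).val : ℂ) / (m k : ℂ)) =
      (2 * Real.pi * Complex.I) * (n : ℂ) := by linear_combination hn
  have h1 : (((x k).val : ℂ) / (m k : ℂ)) = (n : ℂ) := mul_left_cancel₀ hI h0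
  have h2 : (((x k).val : ℂ)) = (n : ℂ) * (m k : ℂ) := (div_eq_iff hmne).1 h1
  have h4 : ((x k).val : ℤ) = n * (m k : ℤ) := by exact_mod_cast h2
  have hv1 : (1 : ℤ) ≤ ((x k).val : ℤ) := by exact_mod_cast hval
  have hv2 : ((x k).val : ℤ) < (m k : ℤ) := by exact_mod_cast hvlt
  have hm2 : (2 : ℤ) ≤ (m k : ℤ) := by exact_mod_cast hm k
  rcases le_or_gt 1 n with hn1 | hn1
  · have : (m k : ℤ) ≤ n * (m k : ℤ) := le_mul_of_one_le_left (by linarith) hn1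
    linarith
  · have hn0 : n ≤ 0 := by omega
    have : n * (m k : ℤ) ≤ 0 := mul_nonpos_of_nonpos_of_nonneg hn0 (by linarith)
    linarith

end Aux2
section Aux3
variable {m : ℕ → ℕ}

lemma Ek_eq_zero (hm : ∀ k, 2 ≤ m k) {x : ∀ i, ZMod (m i)} {j : ℕ} (h : x j ≠ 0) :
    Ek m j x = 0 := by
  rw [Ek, geom_sum_eq (rad_ne_one hm h), rad_pow_m x j (by have := hm j; omega)]
  simp

lemma Ek_eq_card {x : ∀ i, ZMod (m i)} {j : ℕ} (h : x j = 0) : Ek m j x = (m j : ℂ) := by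
  simp [Ek, rad_eq_one h]

lemma norm_Ek_le (x : ∀ i, ZMod (m i)) (j : ℕ) : ‖Ek m j x‖ ≤ (m j : ℝ) := by
  calc ‖Ek m j x‖ ≤ ∑ k ∈ Finset.range (m j), ‖rad m j x ^ k‖ := norm_sum_le _ _
    _ = ∑ k ∈ Finset.range (m j), 1 := by
        apply Finset.sum_congr rfl
        intro k _
        rw [norm_pow, norm_rad, one_pow]
    _ = (m j : ℝ) := by simp

lemma norm_Tk_le (x : ∀ i, ZMod (m i)) (j : ℕ) : ‖Tk m j x‖ ≤ (m j : ℝ) ^ 2 := by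
  calc ‖Tk m j x‖ ≤ ∑ k ∈ Finset.range (m j), ‖∑ l ∈ Finset.range k, rad m j x ^ l‖ :=
        norm_sum_le _ _
    _ ≤ ∑ k ∈ Finset.range (m j), (m j : ℝ) := by
        apply Finset.sum_le_sum
        intro k hk
        simp only [Finset.mem_range] at hk
        calc ‖∑ l ∈ Finset.range k, rad m j x ^ l‖ ≤ ∑ l ∈ Finset.range k, ‖rad m j x ^ l‖ :=
              norm_sum_le _ _
          _ = ∑ l ∈ Finset.range k, 1 := by
              apply Finset.sum_congr rfl
              intro l _
              rw [norm_pow, norm_rad, one_pow]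
          _ = (k : ℝ) := by simp
          _ ≤ (m j : ℝ) := by exact_mod_cast hk.le
    _ = (m j : ℝ) * (m j : ℝ) := by simp [mul_comm]
    _ = (m j : ℝ) ^ 2 := by ring

lemma norm_psi_eq (x : ∀ i, ZMod (m i)) (n : ℕ) : ‖psi m n x‖ = 1 := by
  rw [psi, norm_prod]
  apply Finset.prod_eq_one
  intro k _
  rw [norm_pow, norm_rad, one_pow]

lemma norm_Dker_le (x : ∀ i, ZMod (m i)) (n : ℕ) : ‖Dker m n x‖ ≤ (n : ℝ) := by
  calc ‖Dker m n x‖ ≤ ∑ j ∈ Finset.range n, ‖psi m j x‖ := norm_sum_le _ _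
    _ = ∑ j ∈ Finset.range n, 1 := Finset.sum_congr rfl (fun j _ => norm_psi_eq x j)
    _ = (n : ℝ) := by simp

lemma Dker_Mf_full (hm : ∀ k, 2 ≤ m k) {x : ∀ i, ZMod (m i)} {A : ℕ}
    (h : ∀ j < A, x j = 0) : Dker m (Mf m A) x = (Mf m A : ℂ) := by
  rw [Dker_Mf_prod hm, Mf_prod]
  push_cast
  apply Finset.prod_congr rfl
  intro j hj
  exact Ek_eq_card (h j (Finset.mem_range.1 hj))

lemma Dker_Mf_zero (hm : ∀ k, 2 ≤ m k) {x : ∀ i, ZMod (m i)} {A j : ℕ}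
    (hj : j < A) (h : x j ≠ 0) : Dker m (Mf m A) x = 0 := by
  rw [Dker_Mf_prod hm]
  exact Finset.prod_eq_zero (Finset.mem_range.2 hj) (Ek_eq_zero hm h)

/-- partial sums of Dirichlet kernels -/
def Sker (m : ℕ → ℕ) (n : ℕ) (x : ∀ i, ZMod (m i)) : ℂ :=
  ∑ k ∈ Finset.range n, Dker m k x

lemma Sker_succ (hm : ∀ k, 2 ≤ m k) (j : ℕ) (x : ∀ i, ZMod (m i)) :
    Sker m (Mf m (j+1)) x =
      (Mf m j : ℂ) * Dker m (Mf m j) x * Tk m j x + Ek m j x * Sker m (Mf m j) x := by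
  show ∑ n ∈ Finset.range (m j * Mf m j), Dker m n x = _
  rw [sum_range_mul_split]
  have key : ∀ k ∈ Finset.range (m j), ∑ q ∈ Finset.range (Mf m j), Dker m (k * Mf m j + q) x
      = (Mf m j : ℂ) * Dker m (Mf m j) x * (∑ l ∈ Finset.range k, rad m j x ^ l)
        + rad m j x ^ k * Sker m (Mf m j) x := by
    intro k hk
    simp only [Finset.mem_range] at hk
    calc ∑ q ∈ Finset.range (Mf m j), Dker m (k * Mf m j + q) x
        = ∑ q ∈ Finset.range (Mf m j),
            (Dker m (Mf m j) x * (∑ l ∈ Finset.range k, rad m j x ^ l)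
              + rad m j x ^ k * Dker m q x) := by
          apply Finset.sum_congr rfl
          intro q hq
          simp only [Finset.mem_range] at hq
          rw [Dker_add hm hk hq.le x, Dker_mul hm hk.le x]
      _ = _ := by
          rw [Finset.sum_add_distrib, Finset.sum_const, ← Finset.mul_sum]
          rw [nsmul_eq_mul, Sker]
          simp only [Finset.card_range]
          ring
  rw [Finset.sum_congr rfl key, Finset.sum_add_distrib, ← Finset.mul_sum, ← Finset.sum_mul]
  rw [Tk, Ek]

lemma Sker_formula (hm : ∀ k, 2 ≤ m k) {x : ∀ i, ZMod (m i)} {t : ℕ}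
    (hxt : x t ≠ 0) :
    ∀ A, t < A → Sker m (Mf m A) x =
      (Mf m t : ℂ) * Dker m (Mf m t) x * Tk m t x * ∏ l ∈ Finset.Ico (t+1) A, Ek m l x := by
  intro A
  induction A with
  | zero => omega
  | succ A ih =>
    intro hA
    rcases Nat.lt_or_ge t A with h | h
    · rw [Sker_succ hm A x, ih h, Dker_Mf_zero hm h hxt,
        Finset.prod_Ico_succ_top (by omega : t + 1 ≤ A)]
      ring
    · have htA : t = A := by omega
      subst htA
      rw [Sker_succ hm t x, Ek_eq_zero hm hxt]
      simp

end Aux3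
section Main
variable {m : ℕ → ℕ}

lemma sub_evec_apply (x : ∀ i, ZMod (m i)) (s v j : ℕ) :
    (x - v • evec m s) j = x j - (if j = s then (v : ZMod (m j)) else 0) := by
  simp only [Pi.sub_apply, Pi.smul_apply, evec]
  congr 1
  split
  · simp [nsmul_eq_mul]
  · simp

set_option maxHeartbeats 1600000 in
lemma rhs_single_le (x : ∀ i, ZMod (m i)) {A s v : ℕ} (hs : s ∈ Finset.range (A+1))
    (hv : v ∈ Finset.Icc 1 (m s - 1)) :
    (Mf m s : ℝ) / (Mf m A : ℝ) * ‖Dker m (Mf m A) (x - v • evec m s)‖ ≤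
    ∑ s ∈ Finset.range (A + 1), (Mf m s : ℝ) / (Mf m A : ℝ) *
      ∑ v ∈ Finset.Icc 1 (m s - 1), ‖Dker m (Mf m A) (x - v • evec m s)‖ := by
  have h1 : ‖Dker m (Mf m A) (x - v • evec m s)‖ ≤
      ∑ w ∈ Finset.Icc 1 (m s - 1), ‖Dker m (Mf m A) (x - w • evec m s)‖ :=
    Finset.single_le_sum (f := fun w => ‖Dker m (Mf m A) (x - w • evec m s)‖)
      (fun w _ => norm_nonneg _) hv
  calc (Mf m s : ℝ) / (Mf m A : ℝ) * ‖Dker m (Mf m A) (x - v • evec m s)‖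
      ≤ (Mf m s : ℝ) / (Mf m A : ℝ) *
        ∑ w ∈ Finset.Icc 1 (m s - 1), ‖Dker m (Mf m A) (x - w • evec m s)‖ := by
        apply mul_le_mul_of_nonneg_left h1 (by positivity)
    _ ≤ _ := by
        apply Finset.single_le_sum (f := fun s => (Mf m s : ℝ) / (Mf m A : ℝ) *
          ∑ v ∈ Finset.Icc 1 (m s - 1), ‖Dker m (Mf m A) (x - v • evec m s)‖) ?_ hs
        intro i _
        have : (0:ℝ) ≤ ∑ v ∈ Finset.Icc 1 (m i - 1), ‖Dker m (Mf m A) (x - v • evec m i)‖ :=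
          Finset.sum_nonneg (fun _ _ => norm_nonneg _)
        positivity

set_option maxHeartbeats 1600000 in
theorem stmt5 (m : ℕ → ℕ) (hm : ∀ k, 2 ≤ m k) (B : ℕ) (hB : ∀ k, m k ≤ B) :
    ∃ c : ℝ, 0 < c ∧ ∀ (A : ℕ) (x : ∀ j, ZMod (m j)),
      ‖Fejer m (Mf m A) x‖ ≤
        c * ∑ s ∈ Finset.range (A + 1), (Mf m s : ℝ) / (Mf m A : ℝ) *
          ∑ v ∈ Finset.Icc 1 (m s - 1), ‖Dker m (Mf m A) (x - v • evec m s)‖ := by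
  have hB2 : 2 ≤ B := le_trans (hm 0) (hB 0)
  refine ⟨(B : ℝ)^2 + 1, by positivity, ?_⟩
  intro A x
  set R := ∑ s ∈ Finset.range (A + 1), (Mf m s : ℝ) / (Mf m A : ℝ) *
      ∑ v ∈ Finset.Icc 1 (m s - 1), ‖Dker m (Mf m A) (x - v • evec m s)‖ with hR
  have hRnonneg : 0 ≤ R := by
    apply Finset.sum_nonneg
    intro i _
    have : (0:ℝ) ≤ ∑ v ∈ Finset.Icc 1 (m i - 1), ‖Dker m (Mf m A) (x - v • evec m i)‖ :=
      Finset.sum_nonneg (fun _ _ => norm_nonneg _)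
    positivity
  have hMA : (0:ℝ) < (Mf m A : ℝ) := by exact_mod_cast Mf_pos hm A
  have hFejer : ‖Fejer m (Mf m A) x‖ = (Mf m A : ℝ)⁻¹ * ‖Sker m (Mf m A) x‖ := by
    rw [Fejer, norm_mul, norm_inv, Complex.norm_natCast]
    rfl
  by_cases hzero : ∀ j < A, x j = 0
  · -- Case 1 : all coordinates below A vanish
    have hSbound : ‖Sker m (Mf m A) x‖ ≤ (Mf m A : ℝ) * (Mf m A : ℝ) := by
      calc ‖Sker m (Mf m A) x‖ ≤ ∑ k ∈ Finset.range (Mf m A), ‖Dker m k x‖ :=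
            norm_sum_le _ _
        _ ≤ ∑ k ∈ Finset.range (Mf m A), (Mf m A : ℝ) := by
            apply Finset.sum_le_sum
            intro k hk
            simp only [Finset.mem_range] at hk
            exact le_trans (norm_Dker_le x k) (by exact_mod_cast hk.le)
        _ = (Mf m A : ℝ) * (Mf m A : ℝ) := by simp [mul_comm]
    have hLHS : ‖Fejer m (Mf m A) x‖ ≤ (Mf m A : ℝ) := by
      rw [hFejer]
      calc (Mf m A : ℝ)⁻¹ * ‖Sker m (Mf m A) x‖
          ≤ (Mf m A : ℝ)⁻¹ * ((Mf m A : ℝ) * (Mf m A : ℝ)) := by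
            apply mul_le_mul_of_nonneg_left hSbound (by positivity)
        _ = (Mf m A : ℝ) := by field_simp
    -- the term s = A, v = 1
    have hv1 : (1 : ℕ) ∈ Finset.Icc 1 (m A - 1) := by
      simp only [Finset.mem_Icc]
      have := hm A; omega
    have hcoords : ∀ j < A, (x - 1 • evec m A) j = 0 := by
      intro j hj
      rw [sub_evec_apply, if_neg (by omega), hzero j hj, sub_zero]
    have hDval : ‖Dker m (Mf m A) (x - 1 • evec m A)‖ = (Mf m A : ℝ) := by
      rw [Dker_Mf_full hm hcoords, Complex.norm_natCast]
    have hterm : (Mf m A : ℝ) ≤ R := by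
      have := rhs_single_le (x := x) (A := A) (s := A) (v := 1)
        (by simp) hv1
      rw [hDval, div_self (ne_of_gt hMA), one_mul] at this
      exact this
    calc ‖Fejer m (Mf m A) x‖ ≤ (Mf m A : ℝ) := hLHS
      _ ≤ 1 * R := by rw [one_mul]; exact hterm
      _ ≤ ((B:ℝ)^2 + 1) * R := by
          apply mul_le_mul_of_nonneg_right _ hRnonneg
          nlinarith [hB2]
  · -- Case 2 : some coordinate below A is nonzero
    push_neg at hzero
    obtain ⟨u, hu, hxu⟩ := hzero
    have hex : ∃ j, x j ≠ 0 := ⟨u, hxu⟩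
    classical
    set t := Nat.find hex with hts
    have hxt : x t ≠ 0 := Nat.find_spec hex
    have hmin : ∀ j < t, x j = 0 := by
      intro j hj
      have := Nat.find_min hex (show j < Nat.find hex by omega)
      exact not_not.1 this
    have htu : t ≤ u := Nat.find_min' hex hxu
    have htA : t < A := lt_of_le_of_lt htu hu
    have hSker : Sker m (Mf m A) x =
        (Mf m t : ℂ) * Dker m (Mf m t) x * Tk m t x * ∏ l ∈ Finset.Ico (t+1) A, Ek m l x :=
      Sker_formula hm hxt A htA
    by_cases h2 : ∀ l ∈ Finset.Ico (t+1) A, x l = 0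
    · -- Subcase 2b
      have hMt : (0:ℝ) < (Mf m t : ℝ) := by exact_mod_cast Mf_pos hm t
      haveI : NeZero (m t) := ⟨by have := hm t; omega⟩
      set P : ℕ := ∏ l ∈ Finset.Ico (t+1) A, m l with hP
      have hPpos : 0 < P := Finset.prod_pos (fun l _ => by have := hm l; omega)
      have hMAeq : (Mf m A : ℕ) = P * (m t * Mf m t) := by
        rw [Mf_prod_Ico (show t + 1 ≤ A by omega)]
        rfl
      have hEk : ∏ l ∈ Finset.Ico (t+1) A, Ek m l x = (P : ℂ) := by
        rw [hP]
        push_cast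
        exact Finset.prod_congr rfl (fun l hl => Ek_eq_card (h2 l hl))
      have hDt : Dker m (Mf m t) x = (Mf m t : ℂ) := Dker_Mf_full hm hmin
      have hSnorm : ‖Sker m (Mf m A) x‖ ≤
          (Mf m t : ℝ) * (Mf m t : ℝ) * (m t : ℝ)^2 * (P : ℝ) := by
        rw [hSker, hDt, hEk]
        simp only [norm_mul, Complex.norm_natCast]
        have hTk : ‖Tk m t x‖ ≤ (m t : ℝ)^2 := norm_Tk_le x t
        have hPr : (0:ℝ) ≤ (P : ℝ) := by positivity
        gcongr
      have hLHS : ‖Fejer m (Mf m A) x‖ ≤ (Mf m t : ℝ) * (m t : ℝ) := by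
        rw [hFejer]
        have hMAr : (Mf m A : ℝ) = (P : ℝ) * ((m t : ℝ) * (Mf m t : ℝ)) := by
          exact_mod_cast hMAeq
        have hmt : (0:ℝ) < (m t : ℝ) := by have := hm t; positivity
        have hPr : (0:ℝ) < (P : ℝ) := by exact_mod_cast hPpos
        calc (Mf m A : ℝ)⁻¹ * ‖Sker m (Mf m A) x‖
            ≤ (Mf m A : ℝ)⁻¹ * ((Mf m t : ℝ) * (Mf m t : ℝ) * (m t : ℝ)^2 * (P : ℝ)) :=
              mul_le_mul_of_nonneg_left hSnorm (by positivity)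
          _ = (Mf m t : ℝ) * (m t : ℝ) := by
              rw [hMAr]
              field_simp
      -- RHS term : s = t, v = (x t).val
      have hvmem : (x t).val ∈ Finset.Icc 1 (m t - 1) := by
        simp only [Finset.mem_Icc]
        have h1 : 0 < (x t).val := Nat.pos_of_ne_zero (fun h' => hxt (by rwa [← ZMod.val_eq_zero]))
        have h2 := ZMod.val_lt (x t)
        omega
      have hcoords : ∀ j < A, (x - (x t).val • evec m t) j = 0 := by
        intro j hj
        rw [sub_evec_apply]
        rcases lt_trichotomy j t with h | h | h
        · rw [if_neg (by omega), hmin j h, sub_zero]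
        · subst h
          rw [if_pos rfl]
          rw [ZMod.natCast_val, ZMod.cast_id]
          exact sub_self _
        · rw [if_neg (by omega), h2 j (by simp only [Finset.mem_Ico]; omega), zero_sub, neg_zero]
      have hDval : ‖Dker m (Mf m A) (x - (x t).val • evec m t)‖ = (Mf m A : ℝ) := by
        rw [Dker_Mf_full hm hcoords, Complex.norm_natCast]
      have hterm : (Mf m t : ℝ) ≤ R := by
        have := rhs_single_le (x := x) (A := A) (s := t) (v := (x t).val)
          (by simp only [Finset.mem_range]; omega) hvmem
        rw [hDval, div_mul_cancel₀ _ (ne_of_gt hMA)] at this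
        exact this
      calc ‖Fejer m (Mf m A) x‖ ≤ (Mf m t : ℝ) * (m t : ℝ) := hLHS
        _ ≤ ((B:ℝ)^2 + 1) * (Mf m t : ℝ) := by
            have hmB : (m t : ℝ) ≤ (B : ℝ) := by exact_mod_cast hB t
            have h2 : (B:ℝ) ≤ (B:ℝ)^2 + 1 := by nlinarith [sq_nonneg ((B:ℝ) - 1)]
            calc (Mf m t : ℝ) * (m t : ℝ) ≤ (Mf m t : ℝ) * ((B:ℝ)^2 + 1) :=
                  mul_le_mul_of_nonneg_left (le_trans hmB h2) hMt.le
              _ = ((B:ℝ)^2 + 1) * (Mf m t : ℝ) := by ring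
        _ ≤ ((B:ℝ)^2 + 1) * R := by
            apply mul_le_mul_of_nonneg_left hterm (by positivity)
    · -- Subcase 2a : kernel vanishes
      push_neg at h2
      obtain ⟨l, hl, hxl⟩ := h2
      have : Sker m (Mf m A) x = 0 := by
        rw [hSker, Finset.prod_eq_zero hl (Ek_eq_zero hm hxl)]
        ring
      rw [hFejer, this, norm_zero, mul_zero]
      have hc : (0:ℝ) ≤ (B:ℝ)^2 + 1 := by positivity
      exact mul_nonneg hc hRnonneg

end Main
end
end
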